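/- Let G = (D, τ0, τ1, τ2) be a graph-encoded map (ribbon graph) and let N be the number of crossing-total directions of its medial graph G_m, i.e., the number of functions o : D → Bool with o(τ1 f) = ¬o(f) for all f ∈ D such that for every edge e of G either o(τ0 f) = o(f) for all flags f of e or o(τ2 f) = o(f) for all flags f of e. Then 2^w ≤ N ≤ Σ_A 2^{c(A)}, where w is the number of orbits on D of the subgroup generated by {τ1, τ0∘τ2} (the number of straight-ahead closed walks of G_m), the sum ranges over all subsets A ⊆ D closed under τ0 and τ2 such that every orbit of the subgroup generated by {τ1, τ2^A} has cardinality divisible by 4 (the even states of G), and c(A) is the number of orbits of the subgroup generated by {τ1, τ2^A} (the number of state circles). -/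

import Mathlib

open scoped Classical

/-- The permutation `τ2^A` of the flags: it agrees with `τ0` on `A` and with `τ2`
off `A`.  When `A` is closed under the commuting fixed-point-free involutions `τ0`
and `τ2`, this is again an involution, hence a permutation. -/
noncomputable def partialDualPerm {D : Type*} (τ0 τ2 : Equiv.Perm D)
    (h0 : ∀ f, τ0 (τ0 f) = f) (h2 : ∀ f, τ2 (τ2 f) = f)
    (A : Set D) (hA0 : ∀ f ∈ A, τ0 f ∈ A) (hA2 : ∀ f ∈ A, τ2 f ∈ A) :
    Equiv.Perm D :=
  Function.Involutive.toPerm (fun f => if f ∈ A then τ0 f else τ2 f) (by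
    intro f
    by_cases hf : f ∈ A
    · simp only [if_pos hf, if_pos (hA0 f hf), h0]
    · have h2f : τ2 f ∉ A := fun h => hf (by
        have := hA2 _ h
        rwa [h2 f] at this)
      simp only [if_neg hf, if_neg h2f, h2])

namespace CTDAux
open MulAction Subgroup

variable {D : Type*}

lemma perm_mul_self (σ : Equiv.Perm D) (h : ∀ f, σ (σ f) = f) : σ * σ = 1 :=
  Equiv.ext fun x => by simp [Equiv.Perm.mul_apply, h]

lemma perm_inv (σ : Equiv.Perm D) (h : ∀ f, σ (σ f) = f) : σ⁻¹ = σ :=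
  inv_eq_of_mul_eq_one_right (perm_mul_self σ h)

lemma conj_rho (σ π : Equiv.Perm D) (hσ : ∀ f, σ (σ f) = f) (hπ : ∀ f, π (π f) = f) (k : ℤ) :
    σ * (σ * π) ^ k * σ = (σ * π) ^ (-k) := by
  have hσ1 : σ⁻¹ = σ := perm_inv σ hσ
  have hconj : σ * (σ * π) * σ⁻¹ = (σ * π)⁻¹ := by
    rw [hσ1, mul_inv_rev, perm_inv π hπ, hσ1]
    simp [← mul_assoc, perm_mul_self σ hσ]
  calc σ * (σ*π)^k * σ = σ * (σ*π)^k * σ⁻¹ := by rw [hσ1]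
  _ = (σ * (σ*π) * σ⁻¹)^k := conj_zpow.symm
  _ = ((σ*π)⁻¹)^k := by rw [hconj]
  _ = (σ*π)^(-k) := by rw [inv_zpow, zpow_neg]

lemma sigma_mul_rho_zpow (σ π : Equiv.Perm D) (hσ : ∀ f, σ (σ f) = f) (hπ : ∀ f, π (π f) = f)
    (k : ℤ) : σ * (σ * π) ^ k = (σ * π) ^ (-k) * σ := by
  have := conj_rho σ π hσ hπ k
  calc σ * (σ*π)^k = σ * (σ*π)^k * σ * σ := by
        rw [mul_assoc, perm_mul_self σ hσ, mul_one]
  _ = (σ*π)^(-k) * σ := by rw [this]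

lemma conj_apply (σ π : Equiv.Perm D) (hσ : ∀ f, σ (σ f) = f) (hπ : ∀ f, π (π f) = f)
    (k : ℤ) (x : D) : σ (((σ*π)^k) x) = ((σ*π)^(-k)) (σ x) := by
  have h := sigma_mul_rho_zpow σ π hσ hπ k
  calc σ (((σ*π)^k) x) = (σ * (σ*π)^k) x := by rw [Equiv.Perm.mul_apply]
  _ = ((σ*π)^(-k) * σ) x := by rw [h]
  _ = ((σ*π)^(-k)) (σ x) := by rw [Equiv.Perm.mul_apply]

lemma normal_form (σ π : Equiv.Perm D) (hσ : ∀ f, σ (σ f) = f) (hπ : ∀ f, π (π f) = f) :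
    ∀ g ∈ closure ({σ, π} : Set (Equiv.Perm D)), ∃ k : ℤ, g = (σ*π)^k ∨ g = (σ*π)^k * σ := by
  intro g hg
  induction hg using closure_induction with
  | mem x hx =>
    rcases hx with rfl | rfl
    · exact ⟨0, Or.inr (by simp)⟩
    · refine ⟨-1, Or.inr ?_⟩
      calc x = x * (σ * σ) := by rw [perm_mul_self σ hσ, mul_one]
      _ = x⁻¹ * (σ * σ) := by rw [perm_inv x hπ]
      _ = x⁻¹ * σ * σ := (mul_assoc _ _ _).symm
      _ = (σ * x)⁻¹ * σ := by rw [mul_inv_rev, perm_inv σ hσ]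
      _ = (σ * x) ^ (-1 : ℤ) * σ := by rw [zpow_neg, zpow_one]
  | one => exact ⟨0, Or.inl (by simp)⟩
  | mul a b ha hb iha ihb =>
    obtain ⟨k, hk | hk⟩ := iha <;> obtain ⟨l, hl | hl⟩ := ihb <;> subst hk hl
    · exact ⟨k + l, Or.inl (zpow_add _ _ _).symm⟩
    · exact ⟨k + l, Or.inr (by rw [← mul_assoc, ← zpow_add])⟩
    · refine ⟨k + -l, Or.inr ?_⟩
      calc (σ*π)^k * σ * (σ*π)^l = (σ*π)^k * (σ * (σ*π)^l) := by rw [mul_assoc]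
      _ = (σ*π)^k * ((σ*π)^(-l) * σ) := by rw [sigma_mul_rho_zpow σ π hσ hπ]
      _ = (σ*π)^k * (σ*π)^(-l) * σ := by rw [mul_assoc]
      _ = (σ*π)^(k + -l) * σ := by rw [← zpow_add]
    · refine ⟨k + -l, Or.inl ?_⟩
      calc (σ*π)^k * σ * ((σ*π)^l * σ) = (σ*π)^k * (σ * (σ*π)^l) * σ := by
            rw [mul_assoc, mul_assoc, mul_assoc]
      _ = (σ*π)^k * ((σ*π)^(-l) * σ) * σ := by rw [sigma_mul_rho_zpow σ π hσ hπ]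
      _ = (σ*π)^k * (σ*π)^(-l) * (σ * σ) := by rw [mul_assoc, mul_assoc, mul_assoc]
      _ = (σ*π)^(k + -l) := by rw [← zpow_add, perm_mul_self σ hσ, mul_one]
  | inv a ha ih =>
    obtain ⟨k, hk | hk⟩ := ih <;> subst hk
    · exact ⟨-k, Or.inl (by rw [← zpow_neg])⟩
    · refine ⟨k, Or.inr ?_⟩
      rw [mul_inv_rev, perm_inv σ hσ, ← zpow_neg, sigma_mul_rho_zpow σ π hσ hπ (-k), neg_neg]

lemma sigma_ne_rho_zpow (σ π : Equiv.Perm D)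
    (hσi : ∀ f, σ (σ f) = f) (hσf : ∀ f, σ f ≠ f)
    (hπi : ∀ f, π (π f) = f) (hπf : ∀ f, π f ≠ f)
    (f : D) (c : ℤ) : σ f ≠ ((σ*π)^c) f := by
  intro h
  have hπρ : ∀ x : D, π x = σ (((σ*π)^(1:ℤ)) x) := by
    intro x
    rw [zpow_one, ← Equiv.Perm.mul_apply, ← mul_assoc, perm_mul_self σ hσi, one_mul]
  rcases Int.even_or_odd c with ⟨d, hd⟩ | ⟨d, hd⟩
  · apply hσf (((σ*π)^d) f)
    rw [conj_apply σ π hσi hπi d f, h, ← Equiv.Perm.mul_apply, ← zpow_add]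
    congr 2
    omega
  · apply hπf (((σ*π)^d) f)
    have e1 : ((σ*π)^(1:ℤ)) (((σ*π)^d) f) = ((σ*π)^(1+d)) f := by
      rw [← Equiv.Perm.mul_apply, ← zpow_add]
    have e2 : ((σ*π)^(-(1+d))) (((σ*π)^c) f) = ((σ*π)^d) f := by
      rw [← Equiv.Perm.mul_apply, ← zpow_add]
      congr 2
      omega
    rw [hπρ, e1, conj_apply σ π hσi hπi (1+d) f, h, e2]

lemma mem_orbit_zpowers_iff (ρ : Equiv.Perm D) (f x : D) :
    x ∈ orbit (zpowers ρ) f ↔ ∃ k : ℤ, (ρ^k) f = x := by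
  constructor
  · rintro ⟨⟨g, hg⟩, rfl⟩
    obtain ⟨k, rfl⟩ := mem_zpowers_iff.mp hg
    exact ⟨k, rfl⟩
  · rintro ⟨k, rfl⟩
    exact ⟨⟨ρ^k, zpow_mem (mem_zpowers ρ) k⟩, rfl⟩

lemma disj_orbits (σ π : Equiv.Perm D)
    (hσi : ∀ f, σ (σ f) = f) (hσf : ∀ f, σ f ≠ f)
    (hπi : ∀ f, π (π f) = f) (hπf : ∀ f, π f ≠ f) (f : D) :
    Disjoint (orbit (zpowers (σ*π)) f) (orbit (zpowers (σ*π)) (σ f)) := by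
  rw [Set.disjoint_left]
  rintro x hx hx'
  rw [mem_orbit_zpowers_iff] at hx hx'
  obtain ⟨k, rfl⟩ := hx
  obtain ⟨l, hl⟩ := hx'
  apply sigma_ne_rho_zpow σ π hσi hσf hπi hπf f (k + -l)
  calc σ f = ((σ*π)^(-l)) (((σ*π)^l) (σ f)) := by
        rw [← Equiv.Perm.mul_apply, ← zpow_add, neg_add_cancel, zpow_zero, Equiv.Perm.one_apply]
  _ = ((σ*π)^(-l)) (((σ*π)^k) f) := by rw [hl]
  _ = ((σ*π)^(k + -l)) f := by rw [← Equiv.Perm.mul_apply, ← zpow_add, add_comm]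

lemma orbit_decomp (σ π : Equiv.Perm D) (hσi : ∀ f, σ (σ f) = f) (hπi : ∀ f, π (π f) = f)
    (f : D) :
    orbit (closure ({σ, π} : Set (Equiv.Perm D))) f
      = orbit (zpowers (σ*π)) f ∪ orbit (zpowers (σ*π)) (σ f) := by
  apply Set.Subset.antisymm
  · rintro x ⟨⟨g, hg⟩, rfl⟩
    obtain ⟨k, rfl | rfl⟩ := normal_form σ π hσi hπi g hg
    · exact Or.inl ((mem_orbit_zpowers_iff _ _ _).mpr ⟨k, rfl⟩)
    · exact Or.inr ((mem_orbit_zpowers_iff _ _ _).mpr ⟨k, rfl⟩)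
  · have hσm : σ ∈ closure ({σ, π} : Set (Equiv.Perm D)) :=
      subset_closure (Set.mem_insert _ _)
    have hπm : π ∈ closure ({σ, π} : Set (Equiv.Perm D)) :=
      subset_closure (Set.mem_insert_of_mem _ rfl)
    rintro x (hx | hx) <;> rw [mem_orbit_zpowers_iff] at hx <;> obtain ⟨k, rfl⟩ := hx
    · exact ⟨⟨(σ*π)^k, zpow_mem (mul_mem hσm hπm) k⟩, rfl⟩
    · exact ⟨⟨(σ*π)^k * σ, mul_mem (zpow_mem (mul_mem hσm hπm) k) hσm⟩, rfl⟩

lemma card_orbit_zpowers [Fintype D] (ρ : Equiv.Perm D) (f : D) :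
    Nat.card (orbit (zpowers ρ) f) = MulAction.period ρ f := by
  rw [Nat.card_congr (orbitZPowersEquiv ρ f), Nat.card_zmod, ← MulAction.period_eq_minimalPeriod]

lemma period_sigma_eq [Fintype D] (σ π : Equiv.Perm D)
    (hσi : ∀ f, σ (σ f) = f) (hπi : ∀ f, π (π f) = f) (f : D) :
    MulAction.period (σ*π) (σ f) = MulAction.period (σ*π) f := by
  have key : ∀ x : D, (σ*π) ^ MulAction.period (σ*π) x • (σ x) = σ x := by
    intro x
    have h1 : ((σ*π) ^ (MulAction.period (σ*π) x : ℤ)) x = x := by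
      have := MulAction.pow_period_smul (σ*π) x
      rw [zpow_natCast]
      exact this
    have h2 : ((σ*π) ^ (-(MulAction.period (σ*π) x : ℤ))) x = x := by
      calc ((σ*π) ^ (-(MulAction.period (σ*π) x : ℤ))) x
          = ((σ*π) ^ (-(MulAction.period (σ*π) x : ℤ)))
              (((σ*π) ^ (MulAction.period (σ*π) x : ℤ)) x) := by rw [h1]
        _ = x := by
            rw [← Equiv.Perm.mul_apply, ← zpow_add, neg_add_cancel, zpow_zero,
              Equiv.Perm.one_apply]
    show ((σ*π) ^ MulAction.period (σ*π) x) (σ x) = σ x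
    calc ((σ*π) ^ MulAction.period (σ*π) x) (σ x)
        = ((σ*π) ^ (MulAction.period (σ*π) x : ℤ)) (σ x) := by rw [zpow_natCast]
      _ = σ (((σ*π)^(-(MulAction.period (σ*π) x : ℤ))) x) := by
          rw [conj_apply σ π hσi hπi, neg_neg]
      _ = σ x := by rw [h2]
  apply Nat.dvd_antisymm
  · exact MulAction.pow_smul_eq_iff_period_dvd.mp (key f)
  · have := key (σ f)
    rw [hσi f] at this
    exact MulAction.pow_smul_eq_iff_period_dvd.mp this

lemma card_orbit_div_four [Fintype D] (σ π : Equiv.Perm D)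
    (hσi : ∀ f, σ (σ f) = f) (hσf : ∀ f, σ f ≠ f)
    (hπi : ∀ f, π (π f) = f) (hπf : ∀ f, π f ≠ f)
    (o : D → Bool) (hoσ : ∀ x, o (σ x) = !o x) (hoπ : ∀ x, o (π x) = o x) (f : D) :
    4 ∣ Nat.card (orbit (closure ({σ, π} : Set (Equiv.Perm D))) f) := by
  have hoρ : ∀ x, o ((σ*π) x) = !o x := by
    intro x
    rw [Equiv.Perm.mul_apply, hoσ, hoπ]
  have hpow : ∀ (n : ℕ) (x : D), o (((σ*π)^n) x) = if Even n then o x else !o x := by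
    intro n
    induction n with
    | zero => simp
    | succ n ih =>
      intro x
      have e : ((σ*π)^(n+1)) x = (σ*π) (((σ*π)^n) x) := by
        rw [← Equiv.Perm.mul_apply, ← pow_succ']
      rw [e, hoρ, ih]
      by_cases h : Even n <;> simp [h, Nat.even_add_one]
  have hper_even : ∀ x : D, Even (MulAction.period (σ*π) x) := by
    intro x
    by_contra h
    have hfix : ((σ*π) ^ MulAction.period (σ*π) x) x = x :=
      MulAction.pow_period_smul (σ*π) x
    have := hpow (MulAction.period (σ*π) x) x
    rw [hfix, if_neg h] at this
    simp at this
  rw [orbit_decomp σ π hσi hπi f, Nat.card_coe_set_eq,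
    Set.ncard_union_eq (disj_orbits σ π hσi hσf hπi hπf f) (Set.toFinite _) (Set.toFinite _),
    ← Nat.card_coe_set_eq, ← Nat.card_coe_set_eq, card_orbit_zpowers,
    card_orbit_zpowers, period_sigma_eq σ π hσi hπi f]
  obtain ⟨m, hm⟩ := hper_even f
  omega

lemma agree_orbit (σ π : Equiv.Perm D) (o o' : D → Bool)
    (hoσ : ∀ x, o (σ x) = !o x) (ho'σ : ∀ x, o' (σ x) = !o' x)
    (hoπ : ∀ x, o (π x) = o x) (ho'π : ∀ x, o' (π x) = o' x) :
    ∀ g ∈ closure ({σ, π} : Set (Equiv.Perm D)), ∀ x : D,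
      (o (g x) = o' (g x)) ↔ (o x = o' x) := by
  intro g hg
  induction hg using closure_induction with
  | mem y hy =>
    rcases hy with rfl | rfl
    · intro x
      rw [hoσ, ho'σ]
      cases o x <;> cases o' x <;> simp
    · intro x
      rw [hoπ, ho'π]
  | one => intro x; rw [Equiv.Perm.one_apply]
  | mul a b ha hb iha ihb =>
    intro x
    rw [Equiv.Perm.mul_apply]
    exact (iha (b x)).trans (ihb x)
  | inv a ha ih =>
    intro x
    have := ih ((a⁻¹ : Equiv.Perm D) x)
    rw [show a (a⁻¹ x) = x from Equiv.apply_symm_apply a x] at this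
    exact this.symm

lemma exists_flip_flip (σ π : Equiv.Perm D)
    (hσi : ∀ f, σ (σ f) = f) (hσf : ∀ f, σ f ≠ f)
    (hπi : ∀ f, π (π f) = f) (hπf : ∀ f, π f ≠ f) :
    ∃ p : D → Bool, (∀ f, p (σ f) = !p f) ∧ (∀ f, p (π f) = !p f) := by
  set H := closure ({σ, π} : Set (Equiv.Perm D)) with hH
  have hσm : σ ∈ H := subset_closure (Set.mem_insert _ _)
  have hπm : π ∈ H := subset_closure (Set.mem_insert_of_mem _ rfl)
  set rep : D → D := fun f => (Quotient.mk'' f : orbitRel.Quotient H D).out with hrep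
  have hrepeq : ∀ g ∈ H, ∀ f : D, rep (g f) = rep f := by
    intro g hg f
    have : (Quotient.mk'' (g f) : orbitRel.Quotient H D) = Quotient.mk'' f :=
      Quotient.sound' ⟨⟨g, hg⟩, rfl⟩
    simp only [hrep, this]
  have hmem : ∀ f : D,
      f ∈ orbit (zpowers (σ*π)) (rep f) ∪ orbit (zpowers (σ*π)) (σ (rep f)) := by
    intro f
    rw [← orbit_decomp σ π hσi hπi]
    exact Quotient.exact' ((Quotient.out_eq' (Quotient.mk'' f : orbitRel.Quotient H D)).symm)
  have hπρ : ∀ x : D, π x = σ (((σ*π)^(1:ℤ)) x) := by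
    intro x
    rw [zpow_one, ← Equiv.Perm.mul_apply, ← mul_assoc, perm_mul_self σ hσi, one_mul]
  have e1 : ∀ (k : ℤ) (x : D), ((σ*π)^(1:ℤ)) (((σ*π)^k) x) = ((σ*π)^(1+k)) x := fun k x => by
    rw [← Equiv.Perm.mul_apply, ← zpow_add]
  have claimA : ∀ f : D, f ∈ orbit (zpowers (σ*π)) (rep f) →
      σ f ∉ orbit (zpowers (σ*π)) (rep f) ∧ π f ∉ orbit (zpowers (σ*π)) (rep f) := by
    intro f hf
    obtain ⟨k, hk⟩ := (mem_orbit_zpowers_iff _ _ _).mp hf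
    have hσY : σ f ∈ orbit (zpowers (σ*π)) (σ (rep f)) := by
      rw [mem_orbit_zpowers_iff]
      exact ⟨-k, by rw [← conj_apply σ π hσi hπi, hk]⟩
    have hπY : π f ∈ orbit (zpowers (σ*π)) (σ (rep f)) := by
      rw [mem_orbit_zpowers_iff]
      have : π f = ((σ*π)^(-(1+k))) (σ (rep f)) := by
        conv_lhs => rw [hπρ f, ← hk, e1 k]
        rw [conj_apply σ π hσi hπi (1+k)]
      exact ⟨-(1+k), this.symm⟩
    have hd := Set.disjoint_right.mp (disj_orbits σ π hσi hσf hπi hπf (rep f))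
    exact ⟨fun h => hd hσY h, fun h => hd hπY h⟩
  have claimB : ∀ f : D, f ∉ orbit (zpowers (σ*π)) (rep f) →
      σ f ∈ orbit (zpowers (σ*π)) (rep f) ∧ π f ∈ orbit (zpowers (σ*π)) (rep f) := by
    intro f hf
    have hfY : f ∈ orbit (zpowers (σ*π)) (σ (rep f)) := (hmem f).resolve_left hf
    obtain ⟨k, hk⟩ := (mem_orbit_zpowers_iff _ _ _).mp hfY
    constructor
    · rw [mem_orbit_zpowers_iff]
      refine ⟨-k, ?_⟩
      rw [← hσi (((σ*π)^(-k)) (rep f))]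
      congr 1
      rw [conj_apply σ π hσi hπi, neg_neg, hk]
    · rw [mem_orbit_zpowers_iff]
      have : π f = ((σ*π)^(-(1+k))) (rep f) := by
        conv_lhs => rw [hπρ f, ← hk, e1 k]
        rw [conj_apply σ π hσi hπi (1+k), hσi]
      exact ⟨-(1+k), this.symm⟩
  refine ⟨fun f => decide (f ∈ orbit (zpowers (σ*π)) (rep f)), ?_, ?_⟩
  · intro f
    have hr : rep (σ f) = rep f := hrepeq σ hσm f
    by_cases hf : f ∈ orbit (zpowers (σ*π)) (rep f)
    · simp [hr, hf, (claimA f hf).1]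
    · simp [hr, hf, (claimB f hf).1]
  · intro f
    have hr : rep (π f) = rep f := hrepeq π hπm f
    by_cases hf : f ∈ orbit (zpowers (σ*π)) (rep f)
    · simp [hr, hf, (claimA f hf).2]
    · simp [hr, hf, (claimB f hf).2]

lemma four_stable (τ0 τ2 : Equiv.Perm D)
    (h0i : ∀ f, τ0 (τ0 f) = f) (h2i : ∀ f, τ2 (τ2 f) = f)
    (hcomm : ∀ f, τ0 (τ2 f) = τ2 (τ0 f)) :
    ∀ g ∈ closure ({τ0, τ2} : Set (Equiv.Perm D)), ∀ x : D,
      g x = x ∨ g x = τ0 x ∨ g x = τ2 x ∨ g x = τ0 (τ2 x) := by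
  intro g hg
  induction hg using closure_induction with
  | mem y hy =>
    rcases hy with rfl | rfl
    · exact fun x => Or.inr (Or.inl rfl)
    · exact fun x => Or.inr (Or.inr (Or.inl rfl))
  | one => exact fun x => Or.inl (Equiv.Perm.one_apply x)
  | mul a b ha hb iha ihb =>
    intro x
    rw [Equiv.Perm.mul_apply]
    rcases ihb x with h | h | h | h <;> rw [h] <;>
      rcases iha (b x) with h' | h' | h' | h' <;> rw [h] at h' <;> rw [h'] <;>
      simp [h0i, h2i, hcomm]
  | inv a ha ih =>
    intro x
    rcases ih ((a⁻¹ : Equiv.Perm D) x) with h | h | h | h <;>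
      rw [show a (a⁻¹ x) = x from Equiv.apply_symm_apply a x] at h
    · exact Or.inl h.symm
    · refine Or.inr (Or.inl ?_)
      conv_rhs => rw [h]
      rw [h0i]
    · refine Or.inr (Or.inr (Or.inl ?_))
      conv_rhs => rw [h]
      rw [h2i]
    · refine Or.inr (Or.inr (Or.inr ?_))
      conv_rhs => rw [h]
      rw [hcomm, h0i, h2i]

lemma crossing_total_of_pi_flip (τ0 τ2 : Equiv.Perm D)
    (h0i : ∀ f, τ0 (τ0 f) = f) (h2i : ∀ f, τ2 (τ2 f) = f)
    (hcomm : ∀ f, τ0 (τ2 f) = τ2 (τ0 f))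
    (o : D → Bool) (hoπ : ∀ x, o (τ0 (τ2 x)) = !o x) (f : D) :
    (∀ g ∈ orbit (closure ({τ0, τ2} : Set (Equiv.Perm D))) f, o (τ0 g) = o g) ∨
    (∀ g ∈ orbit (closure ({τ0, τ2} : Set (Equiv.Perm D))) f, o (τ2 g) = o g) := by
  have h2v : o (τ2 f) = !o (τ0 f) := by
    have := hoπ (τ0 f)
    rw [hcomm, h0i] at this
    rw [this]
  have hform : ∀ g ∈ orbit (closure ({τ0, τ2} : Set (Equiv.Perm D))) f,
      g = f ∨ g = τ0 f ∨ g = τ2 f ∨ g = τ0 (τ2 f) := by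
    rintro g ⟨⟨u, hu⟩, rfl⟩
    exact four_stable τ0 τ2 h0i h2i hcomm u hu f
  by_cases hc : o (τ0 f) = o f
  · left
    intro g hg
    rcases hform g hg with h | h | h | h <;> rw [h]
    · exact hc
    · rw [h0i, hc]
    · rw [hoπ, h2v, hc]
    · rw [h0i, hoπ, h2v, hc]
  · have hc' : o (τ0 f) = !o f := by
      cases h1 : o f <;> cases h2 : o (τ0 f) <;> simp_all
    right
    intro g hg
    rcases hform g hg with h | h | h | h <;> rw [h]
    · rw [h2v, hc']
      cases o f <;> simp
    · rw [← hcomm, hoπ, hc']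
    · rw [h2i, h2v, hc']
      cases o f <;> simp
    · rw [← hcomm, h2i, hoπ, hc']

end CTDAux

lemma partialDualPerm_apply {D : Type*} (τ0 τ2 : Equiv.Perm D)
    (h0 : ∀ f, τ0 (τ0 f) = f) (h2 : ∀ f, τ2 (τ2 f) = f)
    (A : Set D) (hA0 : ∀ f ∈ A, τ0 f ∈ A) (hA2 : ∀ f ∈ A, τ2 f ∈ A) (f : D) :
    partialDualPerm τ0 τ2 h0 h2 A hA0 hA2 f = if f ∈ A then τ0 f else τ2 f := rfl


/-- **Lemma (bounds on the number of crossing-total directions).**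
Let `G = (D, τ0, τ1, τ2)` be a graph-encoded map and let `N` be the number of
crossing-total directions of its medial graph `G_m`.  Then
`2^{t(G_m)} ≤ N ≤ Σ_{S ∈ 𝓔𝓢} 2^{c(S)}`, where `t(G_m)` is the number of
straight-ahead closed walks of `G_m` (orbits of `⟨τ1, τ0 ∘ τ2⟩`), the sum ranges
over the even states of `G` (subsets `A ⊆ D` closed under `τ0` and `τ2` all of whose
state circles, the `⟨τ1, τ2^A⟩`-orbits, have cardinality divisible by 4), and `c(S)`
is the number of state circles of the state `S`. -/
theorem crossingTotal_count_bounds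
    {D : Type*} [Fintype D] [Nonempty D]
    (τ0 τ1 τ2 : Equiv.Perm D)
    (h0i : ∀ f, τ0 (τ0 f) = f) (h0f : ∀ f, τ0 f ≠ f)
    (h1i : ∀ f, τ1 (τ1 f) = f) (h1f : ∀ f, τ1 f ≠ f)
    (h2i : ∀ f, τ2 (τ2 f) = f) (h2f : ∀ f, τ2 f ≠ f)
    (hcomm : ∀ f, τ0 (τ2 f) = τ2 (τ0 f))
    (h02f : ∀ f, τ0 (τ2 f) ≠ f)
    -- N is the number of crossing-total directions of the medial graph G_m
    (N : ℕ)
    (hN : N = Nat.card {o : D → Bool //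
      (∀ f : D, o (τ1 f) = !o f) ∧
      ∀ f : D,
        (∀ g ∈ MulAction.orbit
            (Subgroup.closure {τ0, τ2} : Subgroup (Equiv.Perm D)) f, o (τ0 g) = o g) ∨
        (∀ g ∈ MulAction.orbit
            (Subgroup.closure {τ0, τ2} : Subgroup (Equiv.Perm D)) f, o (τ2 g) = o g)}) :
    2 ^ Nat.card (MulAction.orbitRel.Quotient
          (Subgroup.closure {τ1, τ0 * τ2} : Subgroup (Equiv.Perm D)) D) ≤ N ∧
    N ≤ ∑ A : {A : Set D // (∀ f ∈ A, τ0 f ∈ A) ∧ (∀ f ∈ A, τ2 f ∈ A)},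
          if (∀ f : D, 4 ∣ Nat.card (MulAction.orbit
                (Subgroup.closure
                  {τ1, partialDualPerm τ0 τ2 h0i h2i A.1 A.2.1 A.2.2} :
                  Subgroup (Equiv.Perm D)) f))
          then 2 ^ Nat.card (MulAction.orbitRel.Quotient
                (Subgroup.closure
                  {τ1, partialDualPerm τ0 τ2 h0i h2i A.1 A.2.1 A.2.2} :
                  Subgroup (Equiv.Perm D)) D)
          else 0 := by
  open MulAction Subgroup CTDAux in
  constructor
  -- Lower bound
  · have hπi02 : ∀ f, (τ0*τ2) ((τ0*τ2) f) = f := by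
      intro f
      show τ0 (τ2 (τ0 (τ2 f))) = f
      rw [hcomm, h0i, h2i]
    have h02ff : ∀ f, (τ0*τ2) f ≠ f := fun f h => h02f f h
    obtain ⟨p, hpσ, hpπ⟩ := exists_flip_flip τ1 (τ0*τ2) h1i h1f hπi02 h02ff
    rw [hN]
    set H := (Subgroup.closure {τ1, τ0 * τ2} : Subgroup (Equiv.Perm D)) with hH
    have hσm : τ1 ∈ H := Subgroup.subset_closure (Set.mem_insert _ _)
    have hπm : (τ0*τ2) ∈ H := Subgroup.subset_closure (Set.mem_insert_of_mem _ rfl)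
    have key : ∀ g ∈ H, ∀ f : D,
        (Quotient.mk'' (g f) : orbitRel.Quotient H D) = Quotient.mk'' f :=
      fun g hg f => Quotient.sound' ⟨⟨g, hg⟩, rfl⟩
    have hF : ∀ s : orbitRel.Quotient H D → Bool,
        (∀ f : D, (fun f => xor (s (Quotient.mk'' f)) (p f)) (τ1 f)
            = !(fun f => xor (s (Quotient.mk'' f)) (p f)) f) ∧
        ∀ f : D,
          (∀ g ∈ MulAction.orbit
              (Subgroup.closure {τ0, τ2} : Subgroup (Equiv.Perm D)) f,
              (fun f => xor (s (Quotient.mk'' f)) (p f)) (τ0 g)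
                = (fun f => xor (s (Quotient.mk'' f)) (p f)) g) ∨
          (∀ g ∈ MulAction.orbit
              (Subgroup.closure {τ0, τ2} : Subgroup (Equiv.Perm D)) f,
              (fun f => xor (s (Quotient.mk'' f)) (p f)) (τ2 g)
                = (fun f => xor (s (Quotient.mk'' f)) (p f)) g) := by
      intro s
      constructor
      · intro f
        simp only
        rw [key τ1 hσm f, hpσ f]
        cases s (Quotient.mk'' f) <;> cases p f <;> simp
      · intro f
        have hflip : ∀ x : D, (fun f => xor (s (Quotient.mk'' f)) (p f)) (τ0 (τ2 x))
            = !(fun f => xor (s (Quotient.mk'' f)) (p f)) x := by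
          intro x
          simp only
          have e : τ0 (τ2 x) = (τ0 * τ2) x := rfl
          rw [e, key (τ0*τ2) hπm x, hpπ x]
          cases s (Quotient.mk'' x) <;> cases p x <;> simp
        exact crossing_total_of_pi_flip τ0 τ2 h0i h2i hcomm
          (fun f => xor (s (Quotient.mk'' f)) (p f)) hflip f
    set F : (orbitRel.Quotient H D → Bool) → {o : D → Bool //
      (∀ f : D, o (τ1 f) = !o f) ∧
      ∀ f : D,
        (∀ g ∈ MulAction.orbit
            (Subgroup.closure {τ0, τ2} : Subgroup (Equiv.Perm D)) f, o (τ0 g) = o g) ∨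
        (∀ g ∈ MulAction.orbit
            (Subgroup.closure {τ0, τ2} : Subgroup (Equiv.Perm D)) f, o (τ2 g) = o g)} :=
      fun s => ⟨fun f => xor (s (Quotient.mk'' f)) (p f), hF s⟩ with hFdef
    have hinj : Function.Injective F := by
      intro s s' h
      funext q
      have h1 : (F s).1 q.out = (F s').1 q.out := by rw [h]
      simp only [hFdef] at h1
      have e : (Quotient.mk'' (q.out) : orbitRel.Quotient H D) = q := by
        rw [Quotient.mk''_eq_mk]
        exact q.out_eq
      rw [e] at h1
      cases hps : p q.out <;> rw [hps] at h1 <;>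
        cases hs : s q <;> rw [hs] at h1 <;> cases hs' : s' q <;> rw [hs'] at h1 <;>
        simp_all
    calc 2 ^ Nat.card (orbitRel.Quotient H D)
        = Nat.card (orbitRel.Quotient H D → Bool) := by
          rw [Nat.card_fun, Nat.card_eq_fintype_card (α := Bool), Fintype.card_bool]
      _ ≤ _ := Nat.card_le_card_of_injective F hinj
  · rw [hN]
    have horb0 : ∀ f : D, orbit (Subgroup.closure {τ0, τ2} : Subgroup (Equiv.Perm D)) (τ0 f)
        = orbit (Subgroup.closure {τ0, τ2} : Subgroup (Equiv.Perm D)) f := by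
      intro f
      have e : τ0 f = (⟨τ0, Subgroup.subset_closure (Set.mem_insert _ _)⟩ :
          (Subgroup.closure {τ0, τ2} : Subgroup (Equiv.Perm D))) • f := rfl
      rw [e, MulAction.orbit_smul]
    have horb2 : ∀ f : D, orbit (Subgroup.closure {τ0, τ2} : Subgroup (Equiv.Perm D)) (τ2 f)
        = orbit (Subgroup.closure {τ0, τ2} : Subgroup (Equiv.Perm D)) f := by
      intro f
      have e : τ2 f = (⟨τ2, Subgroup.subset_closure (Set.mem_insert_of_mem _ rfl)⟩ :
          (Subgroup.closure {τ0, τ2} : Subgroup (Equiv.Perm D))) • f := rfl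
      rw [e, MulAction.orbit_smul]
    let S := {o : D → Bool //
      (∀ f : D, o (τ1 f) = !o f) ∧
      ∀ f : D,
        (∀ g ∈ MulAction.orbit
            (Subgroup.closure {τ0, τ2} : Subgroup (Equiv.Perm D)) f, o (τ0 g) = o g) ∨
        (∀ g ∈ MulAction.orbit
            (Subgroup.closure {τ0, τ2} : Subgroup (Equiv.Perm D)) f, o (τ2 g) = o g)}
    let Φ : S → {A : Set D // (∀ f ∈ A, τ0 f ∈ A) ∧ (∀ f ∈ A, τ2 f ∈ A)} := fun o =>
      ⟨{f | ∀ g ∈ orbit (Subgroup.closure {τ0, τ2} : Subgroup (Equiv.Perm D)) f,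
          o.1 (τ0 g) = o.1 g},
       fun f hf => by
         simp only [Set.mem_setOf_eq] at hf ⊢
         rw [horb0 f]
         exact hf,
       fun f hf => by
         simp only [Set.mem_setOf_eq] at hf ⊢
         rw [horb2 f]
         exact hf⟩
    have hconst0 : ∀ (o : S) (x : D), x ∈ (Φ o).1 → o.1 (τ0 x) = o.1 x := fun o x hx =>
      hx x (MulAction.mem_orbit_self x)
    have hconst2 : ∀ (o : S) (x : D), x ∉ (Φ o).1 → o.1 (τ2 x) = o.1 x := by
      intro o x hx
      rcases o.2.2 x with hl | hr
      · exact absurd hl hx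
      · exact hr x (MulAction.mem_orbit_self x)
    have step1 : Nat.card S
        = ∑ A : {A : Set D // (∀ f ∈ A, τ0 f ∈ A) ∧ (∀ f ∈ A, τ2 f ∈ A)},
            Nat.card {o : S // Φ o = A} := by
      rw [Nat.card_congr (Equiv.sigmaFiberEquiv Φ).symm, Nat.card_eq_fintype_card,
        Fintype.card_sigma]
      exact Finset.sum_congr rfl fun A _ => (Nat.card_eq_fintype_card).symm
    rw [step1]
    apply Finset.sum_le_sum
    intro A _
    by_cases hne : Nonempty {o : S // Φ o = A}
    · obtain ⟨u⟩ := hne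
      set πA := partialDualPerm τ0 τ2 h0i h2i A.1 A.2.1 A.2.2 with hπA
      have hπi : ∀ f, πA (πA f) = f := by
        intro f
        rw [hπA, partialDualPerm_apply, partialDualPerm_apply]
        by_cases hf : f ∈ A.1
        · rw [if_pos hf, if_pos (A.2.1 f hf), h0i]
        · have h2f' : τ2 f ∉ A.1 := fun h => hf (by
            have := A.2.2 _ h
            rwa [h2i f] at this)
          rw [if_neg hf, if_neg h2f', h2i]
      have hπf : ∀ f, πA f ≠ f := by
        intro f h
        rw [hπA, partialDualPerm_apply] at h
        by_cases hf : f ∈ A.1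
        · exact h0f f (by rwa [if_pos hf] at h)
        · exact h2f f (by rwa [if_neg hf] at h)
      have hoπA : ∀ (v : {o : S // Φ o = A}) (x : D), v.1.1 (πA x) = v.1.1 x := by
        intro v x
        rw [hπA, partialDualPerm_apply]
        by_cases hx : x ∈ A.1
        · rw [if_pos hx]
          exact hconst0 v.1 x (by rw [v.2]; exact hx)
        · rw [if_neg hx]
          exact hconst2 v.1 x (by rw [v.2]; exact hx)
      rw [if_pos (fun f => card_orbit_div_four τ1 πA h1i h1f hπi hπf u.1.1 u.1.2.1 (hoπA u) f)]
      have hGinj : Function.Injective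
          (fun (v : {o : S // Φ o = A})
            (q : orbitRel.Quotient (Subgroup.closure {τ1, πA} : Subgroup (Equiv.Perm D)) D) =>
            v.1.1 q.out) := by
        intro v w h
        apply Subtype.ext
        apply Subtype.ext
        funext f
        set q : orbitRel.Quotient (Subgroup.closure {τ1, πA} : Subgroup (Equiv.Perm D)) D :=
          Quotient.mk'' f with hq
        have hval : v.1.1 q.out = w.1.1 q.out := congrFun h q
        have hmkout : (Quotient.mk'' q.out :
            orbitRel.Quotient (Subgroup.closure {τ1, πA} : Subgroup (Equiv.Perm D)) D) = q := by
          rw [Quotient.mk''_eq_mk]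
          exact q.out_eq
        have hforb : f ∈ orbit (Subgroup.closure {τ1, πA} : Subgroup (Equiv.Perm D)) q.out :=
          Quotient.exact' (hq ▸ hmkout.symm)
        obtain ⟨⟨g, hg⟩, hgf⟩ := hforb
        have hagree := (agree_orbit τ1 πA v.1.1 w.1.1 v.1.2.1 w.1.2.1
          (hoπA v) (hoπA w) g hg q.out).mpr hval
        have e : g q.out = f := hgf
        rw [e] at hagree
        exact hagree
      calc Nat.card {o : S // Φ o = A}
          ≤ Nat.card ((orbitRel.Quotient
              (Subgroup.closure {τ1, πA} : Subgroup (Equiv.Perm D)) D) → Bool) :=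
            Nat.card_le_card_of_injective _ hGinj
        _ = 2 ^ Nat.card (orbitRel.Quotient
              (Subgroup.closure {τ1, πA} : Subgroup (Equiv.Perm D)) D) := by
            rw [Nat.card_fun, Nat.card_eq_fintype_card (α := Bool), Fintype.card_bool]
    · have : IsEmpty {o : S // Φ o = A} := not_nonempty_iff.mp hne
      rw [Nat.card_of_isEmpty]
      exact Nat.zero_le _
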